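/- Let (R, m) be a Noetherian local ring that is not m-adically complete, with residue field k = R/m. Then the quotient map f : R → k is not a flat cover, but its Matlis dual f^∨ : k^∨ → R^∨, which is the map k → E(k), is an injective envelope. -/

import Mathlib

universe u

variable (R : Type u) [CommRing R]

/-- A morphism `f : F → M` with `F` flat is a flat precover if every morphism from a
flat module to `M` factors through `f`. -/
def IsFlatPrecover {F M : Type u} [AddCommGroup F] [AddCommGroup M] [Module R F]
    [Module R M] (f : F →ₗ[R] M) : Prop :=
  Module.Flat R F ∧
    ∀ (F' : Type u) [AddCommGroup F'] [Module R F'], Module.Flat R F' →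
      ∀ g : F' →ₗ[R] M, ∃ h : F' →ₗ[R] F, f ∘ₗ h = g

/-- A flat precover `f : F → M` is a flat cover if every `h : F → F` with `f ∘ h = f`
is an automorphism. -/
def IsFlatCover {F M : Type u} [AddCommGroup F] [AddCommGroup M] [Module R F]
    [Module R M] (f : F →ₗ[R] M) : Prop :=
  IsFlatPrecover R f ∧ ∀ h : F →ₗ[R] F, f ∘ₗ h = f → Function.Bijective h

/-- A morphism `i : M → E` is an injective envelope if `E` is injective, `i` is
injective, and the image of `i` is an essential submodule of `E`. -/
def IsInjectiveEnvelope {M E : Type u} [AddCommGroup M] [AddCommGroup E] [Module R M]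
    [Module R E] (i : M →ₗ[R] E) : Prop :=
  Module.Injective R E ∧ Function.Injective i ∧
    ∀ N : Submodule R E, N ≠ ⊥ → N ⊓ LinearMap.range i ≠ ⊥

/-- An injective cogenerator is an injective module `E` such that `Hom(N, E) ≠ 0`
for every nonzero module `N`. -/
def IsInjectiveCogenerator (E : Type u) [AddCommGroup E] [Module R E] : Prop :=
  Module.Injective R E ∧
    ∀ (N : Type u) [AddCommGroup N] [Module R N], (∃ x : N, x ≠ 0) →
      ∃ g : N →ₗ[R] E, g ≠ 0

/-- Given a module `D` (to be thought of as `⊕ E(R/𝔫)`, the direct sum of injective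
envelopes of the residue fields of all maximal ideals, so that `Hom_R(-, D)` is the
Matlis dual), a module `M` is Matlis reflexive if the evaluation map
`M → Hom_R(Hom_R(M, D), D)` is an isomorphism. -/
def IsMatlisReflexive (D : Type u) [AddCommGroup D] [Module R D]
    (M : Type u) [AddCommGroup M] [Module R M] : Prop :=
  Function.Bijective (LinearMap.applyₗ : M →ₗ[R] ((M →ₗ[R] D) →ₗ[R] D))

section Helpers
open AdicCompletion


lemma smul_top_ideal {R : Type u} [CommRing R] (J : Ideal R) :
    (J • ⊤ : Submodule R R) = J := by
  rw [smul_eq_mul, Ideal.mul_top]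

lemma mem_smul_top_of_eval_eq_zero {R : Type u} [CommRing R] [IsNoetherianRing R]
    (I : Ideal R) (n : ℕ) (y : AdicCompletion I R)
    (hy : AdicCompletion.eval I R n y = 0) :
    y ∈ (I ^ n • ⊤ : Submodule R (AdicCompletion I R)) := by
  classical
  set K : Submodule R R := I ^ n • ⊤ with hK
  obtain ⟨c, rfl⟩ := AdicCompletion.mk_surjective I R y
  have hcn : c n ∈ K := by
    have h0 : (Submodule.Quotient.mk (c n) : R ⧸ K) = 0 := hy
    exact (Submodule.Quotient.mk_eq_zero K).mp h0
  have hexact := AdicCompletion.map_exact (I := I) (Submodule.injective_subtype K)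
    (LinearMap.exact_subtype_mkQ K) (Submodule.mkQ_surjective K)
  have hzero : AdicCompletion.map I K.mkQ (AdicCompletion.mk I R c) = 0 := by
    rw [AdicCompletion.map_mk]
    ext m
    have h1 : c m - c (max m n) ∈ (I ^ m • ⊤ : Submodule R R) :=
      (SModEq.sub_mem).mp (c.property (le_max_left m n))
    have h2 : (c (max m n) : R) ∈ K := by
      have h3 : (c n : R) - c (max m n) ∈ K := (SModEq.sub_mem).mp (c.property (le_max_right m n))
      simpa using K.sub_mem hcn h3
    have h2' : K.mkQ (c (max m n)) = 0 := (Submodule.Quotient.mk_eq_zero K).mpr h2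
    have heq : K.mkQ (c m) = K.mkQ (c m - c (max m n)) := by
      rw [map_sub, h2', sub_zero]
    have hmem : K.mkQ (c m) ∈ (I ^ m • ⊤ : Submodule R (R ⧸ K)) := by
      rw [heq]
      have h4 : K.mkQ (c m - c (max m n)) ∈ Submodule.map K.mkQ (I ^ m • ⊤ : Submodule R R) :=
        Submodule.mem_map_of_mem h1
      rw [Submodule.map_smul''] at h4
      exact Submodule.smul_mono le_rfl le_top h4
    simpa [Submodule.Quotient.mk_eq_zero, AdicCompletion.mk_apply_coe] using hmem
  obtain ⟨x, hx⟩ := (hexact _).mp hzero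
  obtain ⟨t, s, hs⟩ := Module.Finite.exists_fin (R := R) (M := K)
  set p : (Fin t → R) →ₗ[R] K := Fintype.linearCombination R s with hp
  have hpsurj : Function.Surjective p := by
    rw [← LinearMap.range_eq_top, hp, Fintype.range_linearCombination, hs]
  obtain ⟨z, hz⟩ := AdicCompletion.map_surjective I hpsurj x
  obtain ⟨d, rfl⟩ := AdicCompletion.mk_surjective I (Fin t → R) z
  set q : (Fin t → R) →ₗ[R] R := K.subtype ∘ₗ p with hq
  have hyq : AdicCompletion.mk I R c
      = AdicCompletion.map I q (AdicCompletion.mk I (Fin t → R) d) := by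
    rw [hq, ← AdicCompletion.map_comp_apply, hz, hx]
  have hcomp : ∀ i : Fin t, IsAdicCauchy I R (fun j => d j i) := by
    intro i m m' hmm'
    rw [SModEq.sub_mem]
    have h1 : d m - d m' ∈ (I ^ m • ⊤ : Submodule R (Fin t → R)) :=
      (SModEq.sub_mem).mp (d.property hmm')
    have h5 : (d m - d m') i ∈
        Submodule.map (LinearMap.proj i) (I ^ m • ⊤ : Submodule R (Fin t → R)) :=
      Submodule.mem_map_of_mem h1
    rw [Submodule.map_smul''] at h5
    exact Submodule.smul_mono le_rfl le_top h5
  set dc : Fin t → AdicCauchySequence I R := fun i => ⟨fun j => d j i, hcomp i⟩ with hdc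
  have hmap : AdicCauchySequence.map I q d = ∑ i, (s i : R) • dc i := by
    ext j
    have hev : ∀ (f : Finset (Fin t)) (g : Fin t → AdicCauchySequence I R),
        ((∑ i ∈ f, g i : AdicCauchySequence I R) : ℕ → R) j = ∑ i ∈ f, (g i : ℕ → R) j := by
      intro f g
      induction f using Finset.induction with
      | empty => rfl
      | insert _ _ hnot ih => rw [Finset.sum_insert hnot, Finset.sum_insert hnot, ← ih]; rfl
    rw [AdicCauchySequence.map_apply_coe, hev]
    simp only [hq, LinearMap.comp_apply, Submodule.coe_subtype, hp,
      Fintype.linearCombination_apply]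
    rw [Submodule.coe_sum]
    refine Finset.sum_congr rfl (fun i _ => ?_)
    show (d j i • s i : K).val = ((s i : R) • dc i) j
    simp [hdc, smul_eq_mul, mul_comm]; rfl
  rw [hyq, AdicCompletion.map_mk, hmap, map_sum]
  refine Submodule.sum_mem _ (fun i _ => ?_)
  rw [map_smul]
  have hsi : (s i : R) ∈ I ^ n := by
    have h6 : (s i : R) ∈ (I ^ n • ⊤ : Submodule R R) := (s i).property
    rwa [smul_top_ideal] at h6
  exact Submodule.smul_mem_smul hsi Submodule.mem_top

lemma isAdicComplete_of_section {R : Type u} [CommRing R] [IsNoetherianRing R] (I : Ideal R)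
    (s : AdicCompletion I R →ₗ[R] R) (hs : s ∘ₗ AdicCompletion.of I R = LinearMap.id) :
    IsAdicComplete I R := by
  have hsec : ∀ x : R, s (AdicCompletion.of I R x) = x := fun x =>
    congrArg (fun f => f x) (congrArg DFunLike.coe hs)
  have hsmem : ∀ (n : ℕ) (w : AdicCompletion I R),
      w ∈ (I ^ n • ⊤ : Submodule R (AdicCompletion I R)) → s w ∈ (I ^ n • ⊤ : Submodule R R) := by
    intro n w hw
    have : s w ∈ Submodule.map s (I ^ n • ⊤ : Submodule R (AdicCompletion I R)) :=
      Submodule.mem_map_of_mem hw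
    rw [Submodule.map_smul''] at this
    exact Submodule.smul_mono le_rfl le_top this
  refine { toIsHausdorff := ⟨fun x hx => ?_⟩, toIsPrecomplete := ⟨fun f hf => ?_⟩ }
  · have hofx : AdicCompletion.of I R x = 0 := by
      apply IsHausdorff.haus (inferInstance : IsHausdorff I (AdicCompletion I R))
      intro n
      rw [SModEq.zero]
      have hxn : x ∈ (I ^ n • ⊤ : Submodule R R) := SModEq.zero.mp (hx n)
      have : AdicCompletion.of I R x ∈
          Submodule.map (AdicCompletion.of I R) (I ^ n • ⊤ : Submodule R R) :=
        Submodule.mem_map_of_mem hxn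
      rw [Submodule.map_smul''] at this
      exact Submodule.smul_mono le_rfl le_top this
    have := hsec x
    rw [hofx, _root_.map_zero] at this
    exact this.symm
  · set c : AdicCauchySequence I R := ⟨f, fun {m n} hmn => hf hmn⟩ with hc
    refine ⟨s (AdicCompletion.mk I R c), fun n => ?_⟩
    rw [SModEq.sub_mem]
    have hev : AdicCompletion.eval I R n
        (AdicCompletion.mk I R c - AdicCompletion.of I R (f n)) = 0 := by
      rw [map_sub]
      show Submodule.Quotient.mk (f n) - Submodule.Quotient.mk (f n) = 0
      rw [sub_self]
    have hmem := mem_smul_top_of_eval_eq_zero I n _ hev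
    have := hsmem n _ hmem
    rw [map_sub, hsec] at this
    simpa using Submodule.neg_mem _ this

lemma Module.Injective.of_equiv {R : Type u} [CommRing R] {M N : Type u} [AddCommGroup M]
    [Module R M] [AddCommGroup N] [Module R N] (e : M ≃ₗ[R] N) (h : Module.Injective R M) :
    Module.Injective R N where
  out X Y _ _ _ _ f hf g := by
    obtain ⟨g', hg'⟩ := h.out f hf (e.symm.toLinearMap ∘ₗ g)
    exact ⟨e.toLinearMap ∘ₗ g', fun x => by simp [hg' x]⟩


end Helpers

/-- Let `(R, 𝔪)` be a Noetherian local ring that is not `𝔪`-adically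
complete, with residue field `k = R/𝔪`.  Then the quotient map `f : R → k` is not a
flat cover, but its Matlis dual `f^∨ : k^∨ → R^∨` is an injective envelope.  Here
`E(k)` is presented by an injective envelope `jk : R/𝔪 → Ek`. -/
theorem quotient_map_not_flatCover_but_dual_injectiveEnvelope
    [IsLocalRing R] [IsNoetherianRing R]
    (Ek : Type u) [AddCommGroup Ek] [Module R Ek]
    (jk : (R ⧸ IsLocalRing.maximalIdeal R) →ₗ[R] Ek) (hjk : IsInjectiveEnvelope R jk)
    (hR : ¬ IsAdicComplete (IsLocalRing.maximalIdeal R) R) :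
    ¬ IsFlatCover R (IsLocalRing.maximalIdeal R).mkQ ∧
      IsInjectiveEnvelope R (LinearMap.lcomp R Ek (IsLocalRing.maximalIdeal R).mkQ) := by
  constructor
  · intro hfc
    unfold IsFlatCover IsFlatPrecover at hfc
    obtain ⟨⟨-, hpre⟩, hcov⟩ := hfc
    set I : Ideal R := IsLocalRing.maximalIdeal R with hI
    have flatC : Module.Flat R (AdicCompletion I R) :=
      AdicCompletion.flat_of_isNoetherian I
    set e1 : (R ⧸ (I ^ 1 • ⊤ : Submodule R R)) ≃ₗ[R] R ⧸ I :=
      Submodule.quotEquivOfEq _ _ (by rw [pow_one, smul_eq_mul, Ideal.mul_top]) with he1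
    set g : AdicCompletion I R →ₗ[R] R ⧸ I := e1.toLinearMap ∘ₗ AdicCompletion.eval I R 1 with hg
    obtain ⟨h, hh⟩ := hpre (AdicCompletion I R) flatC g
    set φ : R →ₗ[R] R := h ∘ₗ AdicCompletion.of I R with hφ
    have hφcomp : I.mkQ ∘ₗ φ = I.mkQ := by
      refine LinearMap.ext (fun r => ?_)
      have : I.mkQ (h (AdicCompletion.of I R r)) = g (AdicCompletion.of I R r) :=
        congrArg (fun f => f (AdicCompletion.of I R r)) (congrArg DFunLike.coe hh)
      simp only [LinearMap.comp_apply, hφ]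
      rw [this, hg]
      show e1 (AdicCompletion.eval I R 1 (AdicCompletion.of I R r)) = _
      rw [AdicCompletion.eval_of]
      show e1 (Submodule.Quotient.mk r) = _
      rw [he1, Submodule.quotEquivOfEq_mk]
      rfl
    have hbij := hcov φ hφcomp
    set eφ := LinearEquiv.ofBijective φ hbij with heφ
    set s : AdicCompletion I R →ₗ[R] R := eφ.symm.toLinearMap ∘ₗ h with hsdef
    have hs : s ∘ₗ AdicCompletion.of I R = LinearMap.id := by
      refine LinearMap.ext (fun r => ?_)
      show eφ.symm (h (AdicCompletion.of I R r)) = r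
      have : h (AdicCompletion.of I R r) = eφ r := rfl
      rw [this, LinearEquiv.symm_apply_apply]
    exact hR (isAdicComplete_of_section I s hs)
  · set Φ := LinearMap.lcomp R Ek (IsLocalRing.maximalIdeal R).mkQ with hΦ
    set e := LinearMap.ringLmapEquivSelf R R Ek with he
    refine ⟨Module.Injective.of_equiv e.symm hjk.1, ?_, ?_⟩
    · intro a b hab
      refine LinearMap.ext (fun y => ?_)
      obtain ⟨x, rfl⟩ := Submodule.mkQ_surjective (IsLocalRing.maximalIdeal R) y
      exact congrArg (fun f => f x) (congrArg DFunLike.coe hab)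
    · intro N hN
      obtain ⟨ψ, hψN, hψ0⟩ := Submodule.exists_mem_ne_zero_of_ne_bot hN
      have hψapp : ∀ x : R, ψ x = x • ψ 1 := by
        intro x
        rw [← map_smul, smul_eq_mul, mul_one]
      have hv : ψ 1 ≠ 0 := by
        intro hv
        apply hψ0
        refine LinearMap.ext (fun x => ?_)
        rw [hψapp x, hv, smul_zero]; rfl
      have hsv : Submodule.span R {ψ 1} ≠ ⊥ := by
        rwa [ne_eq, Submodule.span_singleton_eq_bot]
      obtain ⟨w, hw, hw0⟩ := Submodule.exists_mem_ne_zero_of_ne_bot (hjk.2.2 _ hsv)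
      obtain ⟨hw1, hw2⟩ := Submodule.mem_inf.mp hw
      obtain ⟨r, hr⟩ := Submodule.mem_span_singleton.mp hw1
      obtain ⟨z, hz⟩ := hw2
      refine Submodule.ne_bot_iff _ |>.mpr ⟨r • ψ, Submodule.mem_inf.mpr ⟨N.smul_mem r hψN, ?_⟩, ?_⟩
      · refine ⟨jk ∘ₗ LinearMap.mulLeft R z, ?_⟩
        refine LinearMap.ext (fun x => ?_)
        show jk (z * Submodule.Quotient.mk x) = r • ψ x
        have h1 : z * Submodule.Quotient.mk x = x • z := by
          rw [Algebra.smul_def, mul_comm]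
          rfl
        rw [h1, map_smul, hz, ← hr, hψapp x, smul_comm]
      · intro hcontra
        apply hw0
        rw [← hr]
        have : (r • ψ) 1 = 0 := by rw [hcontra]; rfl
        rwa [LinearMap.smul_apply] at this
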